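/- For α ∈ C, α ≠ 0, and n ≥ 0, the operator M_z + α zⁿ ⊗ 1 on the Dirichlet space is a 2-isometry if and only if n = 1 and |α|² = −2 Re(α). -/

import Mathlib

/-- The squared Dirichlet norm of a coefficient sequence: `‖Σ aₖ zᵏ‖² = Σ (k+1)|aₖ|²`. -/
noncomputable def Dnorm2 (a : ℕ → ℂ) : ℝ := ∑' k : ℕ, (k + 1 : ℝ) * ‖a k‖ ^ 2

/-- Membership in the Dirichlet space: `Σ (k+1)|aₖ|² < ∞`. -/
def DMem (a : ℕ → ℂ) : Prop := Summable fun k : ℕ => (k + 1 : ℝ) * ‖a k‖ ^ 2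

/-- Multiplication by `z` on coefficient sequences. -/
def Mz (a : ℕ → ℂ) : ℕ → ℂ := fun k => if k = 0 then 0 else a (k - 1)

lemma aux_norm_one_add (α : ℂ) : ‖1+α‖^2 = 1 + 2*α.re + ‖α‖^2 := by
  rw [Complex.sq_norm, Complex.sq_norm]
  simp [Complex.normSq_apply]
  ring

lemma aux_DMem_fin (b : ℕ → ℂ) (s : Finset ℕ) (h : ∀ k ∉ s, b k = 0) : DMem b :=
  summable_of_ne_finset_zero (s := s) (fun k hk => by simp [h k hk])

lemma aux_Dnorm2_fin (b : ℕ → ℂ) (s : Finset ℕ) (h : ∀ k ∉ s, b k = 0) :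
    Dnorm2 b = ∑ k ∈ s, ((k : ℝ) + 1) * ‖b k‖ ^ 2 :=
  tsum_eq_sum (fun k hk => by simp [h k hk])

lemma aux_shift (c d : ℕ → ℝ) (hd0 : d 0 = 0) (h : ∀ k, d (k+1) = c k)
    (hc : Summable c) : Summable d ∧ ∑' k, d k = ∑' k, c k := by
  have hs : Summable (fun k => d (k+1)) := by simpa only [h] using hc
  have hd : Summable d := (summable_nat_add_iff 1).mp hs
  refine ⟨hd, ?_⟩
  rw [Summable.tsum_eq_zero_add hd, hd0, zero_add]
  exact tsum_congr h

lemma aux_sq_summable (a : ℕ → ℂ) (ha : DMem a) : Summable (fun k => ‖a k‖^2) := by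
  refine Summable.of_nonneg_of_le (fun k => sq_nonneg _) (fun k => ?_) ha
  have h0 : (0:ℝ) ≤ (k:ℝ) := Nat.cast_nonneg k
  have : (1:ℝ) ≤ (k:ℝ) + 1 := by linarith
  nlinarith [sq_nonneg ‖a k‖]

lemma aux_L1 (a b : ℕ → ℂ) (ha : DMem a) (hb0 : b 0 = 0)
    (hb : ∀ k, ‖b (k+1)‖ = ‖a k‖) :
    DMem b ∧ Dnorm2 b = Dnorm2 a + ∑' k, ‖a k‖^2 := by
  have hsq := aux_sq_summable a ha
  have ha' : Summable (fun k : ℕ => ((k:ℝ)+1) * ‖a k‖^2) := ha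
  have hc : Summable (fun k : ℕ => ((k:ℝ)+1) * ‖a k‖^2 + ‖a k‖^2) := ha'.add hsq
  have hsh := aux_shift (fun k => ((k:ℝ)+1) * ‖a k‖^2 + ‖a k‖^2)
    (fun j => ((j:ℝ)+1) * ‖b j‖^2) (by simp [hb0]) (fun k => by
      simp only [hb]; push_cast; ring) hc
  refine ⟨hsh.1, ?_⟩
  have := hsh.2
  rw [Summable.tsum_add ha hsq] at this
  exact this

lemma aux_L2 (a b : ℕ → ℂ) (ha : DMem a) (hb0 : b 0 = 0)
    (hb : ∀ k, ‖b (k+1)‖ = ‖a k‖) :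
    Summable (fun k => ‖b k‖^2) ∧ ∑' k, ‖b k‖^2 = ∑' k, ‖a k‖^2 :=
  aux_shift (fun k => ‖a k‖^2) (fun j => ‖b j‖^2) (by simp [hb0])
    (fun k => by simp only [hb]) (aux_sq_summable a ha)

theorem stmt_17 (α : ℂ) (hα : α ≠ 0) (n : ℕ)
    (A : (ℕ → ℂ) → (ℕ → ℂ))
    (hA : ∀ a : ℕ → ℂ, A a = fun j => Mz a j + a 0 * (if j = n then α else 0)) :
    (∀ a : ℕ → ℂ, DMem a →
        Dnorm2 a - 2 * Dnorm2 (A a) + Dnorm2 (A (A a)) = 0) ↔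
      (n = 1 ∧ ‖α‖ ^ 2 = -2 * α.re) := by
  constructor
  · intro h
    set e0 : ℕ → ℂ := fun k => if k = 0 then 1 else 0 with he0
    have hmem : DMem e0 := aux_DMem_fin e0 {0} (fun k hk => by
      simp only [Finset.mem_singleton] at hk; simp [he0, hk])
    have hD0 : Dnorm2 e0 = 1 := by
      rw [aux_Dnorm2_fin e0 {0} (fun k hk => by
        simp only [Finset.mem_singleton] at hk; simp [he0, hk])]
      simp [he0]
    have key := h e0 hmem
    rw [hD0] at key
    match n with
    | 0 =>
      exfalso
      have h1 : A e0 = fun j => if j = 0 then α else if j = 1 then 1 else 0 := by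
        funext j
        rw [hA]
        rcases j with _ | _ | j <;> simp [Mz, he0]
      have h2 : A (A e0) = fun j => if j = 0 then α*α else if j = 1 then α
          else if j = 2 then 1 else 0 := by
        funext j
        rw [hA, h1]
        rcases j with _ | _ | _ | j <;> simp [Mz]
      have hD1 : Dnorm2 (A e0) = ‖α‖^2 + 2 := by
        rw [aux_Dnorm2_fin (A e0) {0, 1} (fun k hk => by
          simp only [Finset.mem_insert, Finset.mem_singleton] at hk
          push_neg at hk
          simp [h1, hk.1, hk.2])]
        simp [h1]; norm_num
      have hD2 : Dnorm2 (A (A e0)) = ‖α‖^2*‖α‖^2 + 2*‖α‖^2 + 3 := by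
        rw [aux_Dnorm2_fin (A (A e0)) {0, 1, 2} (fun k hk => by
          simp only [Finset.mem_insert, Finset.mem_singleton] at hk
          push_neg at hk
          simp [h2, hk.1, hk.2.1, hk.2.2])]
        simp [h2, norm_mul, mul_pow]; ring
      rw [hD1, hD2] at key
      have : ‖α‖^2 = 0 := by nlinarith [sq_nonneg ‖α‖]
      exact hα (norm_eq_zero.mp (pow_eq_zero_iff two_ne_zero |>.mp this))
    | 1 =>
      refine ⟨rfl, ?_⟩
      have h1 : A e0 = fun j => if j = 1 then 1 + α else 0 := by
        funext j
        rw [hA]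
        rcases j with _ | _ | j <;> simp [Mz, he0] <;> tauto
      have h2 : A (A e0) = fun j => if j = 2 then 1 + α else 0 := by
        funext j
        rw [hA, h1]
        rcases j with _ | _ | _ | j <;> simp [Mz] <;> tauto
      have hD1 : Dnorm2 (A e0) = 2 * ‖1+α‖^2 := by
        rw [aux_Dnorm2_fin (A e0) {1} (fun k hk => by
          simp only [Finset.mem_singleton] at hk; simp [h1, hk])]
        rw [Finset.sum_singleton]
        simp only [h1]
        norm_num
      have hD2 : Dnorm2 (A (A e0)) = 3 * ‖1+α‖^2 := by
        rw [aux_Dnorm2_fin (A (A e0)) {2} (fun k hk => by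
          simp only [Finset.mem_singleton] at hk; simp [h2, hk])]
        rw [Finset.sum_singleton]
        simp only [h2]
        norm_num
      rw [hD1, hD2] at key
      have hx : ‖1+α‖^2 = 1 := by linarith
      rw [aux_norm_one_add] at hx
      linarith
    | (m+2) =>
      exfalso
      have hne1 : (1 : ℕ) ≠ m + 2 := by omega
      have hne2 : (2 : ℕ) ≠ m + 3 := by omega
      have h1 : A e0 = fun j => if j = 1 then 1 else if j = m+2 then α else 0 := by
        funext j
        rw [hA]
        rcases j with _ | _ | j
        · simp [Mz, he0, show ¬(0 = m+2) from by omega]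
        · simp [Mz, he0, show ¬(1 = m+2) from by omega]
        · have : j + 2 ≠ 1 := by omega
          rcases eq_or_ne (j+2) (m+2) with hj | hj <;> simp [Mz, he0, hj, this]
      have h2 : A (A e0) = fun j => if j = 2 then 1 else if j = m+3 then α else 0 := by
        funext j
        rw [hA, h1]
        rcases j with _ | _ | _ | j
        · simp [Mz, show ¬(0 = m+3) from by omega, show ¬(0 = m+2) from by omega]
        · simp [Mz, show ¬(1 = m+3) from by omega, show ¬(1 = m+2) from by omega,
            show ¬(0 = m+2) from by omega]
        · simp [Mz, show ¬(2 = m+3) from by omega, show ¬(1 = m+2) from by omega]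
        · have h3 : j + 3 ≠ 1 := by omega
          have h4 : j + 3 ≠ 2 := by omega
          rcases eq_or_ne (j+3) (m+3) with hj | hj
          · have hj2 : j + 2 = m + 2 := by omega
            simp [Mz, hj, hj2, h3, h4]
          · have hj2 : j + 2 ≠ m + 2 := by omega
            simp [Mz, hj, hj2, h3, h4]
      have hD1 : Dnorm2 (A e0) = 2 + ((m:ℝ)+3) * ‖α‖^2 := by
        rw [aux_Dnorm2_fin (A e0) {1, m+2} (fun k hk => by
          simp only [Finset.mem_insert, Finset.mem_singleton] at hk
          push_neg at hk
          simp [h1, hk.1, hk.2])]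
        rw [Finset.sum_pair hne1]
        simp [h1, hne1]
        push_cast; ring
      have hD2 : Dnorm2 (A (A e0)) = 3 + ((m:ℝ)+4) * ‖α‖^2 := by
        rw [aux_Dnorm2_fin (A (A e0)) {2, m+3} (fun k hk => by
          simp only [Finset.mem_insert, Finset.mem_singleton] at hk
          push_neg at hk
          simp [h2, hk.1, hk.2])]
        rw [Finset.sum_pair hne2]
        simp [h2, hne2]
        push_cast; ring
      rw [hD1, hD2] at key
      have hm : (0:ℝ) ≤ (m:ℝ) := Nat.cast_nonneg m
      have : ‖α‖^2 = 0 := by nlinarith [sq_nonneg ‖α‖]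
      exact hα (norm_eq_zero.mp (pow_eq_zero_iff two_ne_zero |>.mp this))
  · rintro ⟨rfl, hα2⟩
    intro a ha
    have hone : ‖(1:ℂ)+α‖ = 1 := by
      have h2 := aux_norm_one_add α
      rw [hα2] at h2
      nlinarith [norm_nonneg ((1:ℂ)+α)]
    have hb0 : A a 0 = 0 := by rw [hA]; simp [Mz]
    have hb : ∀ k, ‖A a (k+1)‖ = ‖a k‖ := by
      intro k
      rw [hA]
      rcases k with _ | k
      · show ‖Mz a (0+1) + a 0 * (if 0+1 = 1 then α else 0)‖ = ‖a 0‖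
        have : Mz a (0+1) + a 0 * (if 0+1 = 1 then α else 0) = a 0 * (1 + α) := by
          simp [Mz]; ring
        rw [this, norm_mul, hone, mul_one]
      · simp [Mz]
    have L1 := aux_L1 a (A a) ha hb0 hb
    have hbb0 : A (A a) 0 = 0 := by rw [hA]; simp [Mz]
    have hbb : ∀ k, ‖A (A a) (k+1)‖ = ‖A a k‖ := by
      intro k
      rw [hA]
      rcases k with _ | k
      · show ‖Mz (A a) (0+1) + A a 0 * (if 0+1 = 1 then α else 0)‖ = ‖A a 0‖
        have : Mz (A a) (0+1) + A a 0 * (if 0+1 = 1 then α else 0) = A a 0 * (1 + α) := by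
          simp [Mz]; ring
        rw [this, norm_mul, hone, mul_one]
      · simp [Mz]
    have L1' := aux_L1 (A a) (A (A a)) L1.1 hbb0 hbb
    have L2 := aux_L2 a (A a) ha hb0 hb
    rw [L1'.2, L1.2, L2.2]
    ring
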